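/- arXiv:1111.6648 — 3 statements merged into one kernel-verified Lean document; each statement's English description precedes it below -/
import Mathlib

section
/- For every integer r ≥ 1, the polynomial identity ∑_{k=0}^{⌊(r-1)/2⌋} (-1)^k · C(r-1-k, k) · q^{1+k} · (1+q)^{r-1-2k} = q + q² + ⋯ + q^r holds in the polynomial ring ℤ[q]. -/
open Polynomial

noncomputable def sA (n k : ℕ) : Polynomial ℤ :=
  Polynomial.C ((-1 : ℤ) ^ k * ((n - k).choose k : ℤ)) * X ^ (1 + k) * (1 + X) ^ (n - 2 * k)

noncomputable def fA (n : ℕ) : Polynomial ℤ := ∑ k ∈ Finset.range (n / 2 + 1), sA n k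

lemma sA_zero (n k : ℕ) (h : n / 2 + 1 ≤ k) : sA n k = 0 := by
  have : n - k < k := by omega
  simp [sA, Nat.choose_eq_zero_of_lt this]

lemma fA_pad (n M : ℕ) (h : n / 2 + 1 ≤ M) : fA n = ∑ k ∈ Finset.range M, sA n k := by
  refine Finset.sum_subset (Finset.range_subset_range.2 h) ?_
  intro k _ hk
  exact sA_zero n k (by simpa using hk)

lemma fA_rec (n : ℕ) : fA (n + 2) = (1 + X) * fA (n + 1) - X * fA n := by
  have h2 : (n + 2) / 2 + 1 = n / 2 + 2 := by omega
  have h1 : (n + 1) / 2 + 1 ≤ n / 2 + 2 := by omega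
  rw [show fA (n+2) = ∑ k ∈ Finset.range (n/2 + 2), sA (n+2) k by
        rw [fA]; rw [h2],
      fA_pad (n+1) (n/2+2) h1, fA, Finset.mul_sum, Finset.mul_sum,
      Finset.sum_range_succ' (fun k => sA (n+2) k),
      Finset.sum_range_succ' (fun k => (1+X) * sA (n+1) k)]
  have h0 : sA (n+2) 0 = (1 + X) * sA (n+1) 0 := by
    simp [sA]; ring
  rw [h0]
  have key : ∀ k ∈ Finset.range (n/2+1),
      sA (n+2) (k+1) = (1+X) * sA (n+1) (k+1) - X * sA n k := by
    intro k hk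
    have hk' : k ≤ n / 2 := by simpa [Nat.lt_succ_iff] using hk
    rcases lt_or_eq_of_le (show 2*k ≤ n by omega) with hlt | heq
    · -- 2k < n, so 2k+1 ≤ n
      have e1 : n + 2 - 2 * (k + 1) = n - 2 * k := by omega
      have e2 : n + 2 - (k + 1) = (n - k) + 1 := by omega
      have e3 : n + 1 - (k + 1) = n - k := by omega
      have e4 : n - 2 * k = (n + 1 - 2 * (k + 1)) + 1 := by omega
      rw [sA, sA, sA, e1, e2, e3, Nat.choose_succ_succ, e4]
      push_cast
      simp only [map_add, map_mul, map_neg, map_one, map_pow]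
      ring
    · -- 2k = n
      have e1 : n + 2 - 2 * (k + 1) = 0 := by omega
      have e2 : n + 2 - (k + 1) = k + 1 := by omega
      have e3 : n + 1 - (k + 1) = k := by omega
      have e4 : n + 1 - 2 * (k + 1) = 0 := by omega
      have e5 : n - 2 * k = 0 := by omega
      have e6 : n - k = k := by omega
      rw [sA, sA, sA, e1, e2, e3, e4, e5, e6]
      simp [Nat.choose_succ_self]
      ring
  rw [Finset.sum_congr rfl key]
  rw [Finset.sum_sub_distrib]
  ring

lemma fA_closed : ∀ n : ℕ, fA n = X * ∑ i ∈ Finset.range (n + 1), (X : Polynomial ℤ) ^ i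
  | 0 => by simp [fA, sA]
  | 1 => by
      simp [fA, sA, Finset.sum_range_succ]
  | (n + 2) => by
      rw [fA_rec, fA_closed (n + 1), fA_closed n]
      rw [Finset.sum_range_succ (fun i => (X : Polynomial ℤ) ^ i) (n+2),
          Finset.sum_range_succ (fun i => (X : Polynomial ℤ) ^ i) (n+1)]
      ring

open Polynomial in
/-- `∑_{k=0}^{⌊(r-1)/2⌋} (-1)^k C(r-1-k,k) q^{1+k} (1+q)^{r-1-2k} = q + q² + ⋯ + q^r` in `ℤ[q]`. -/
theorem alternating_sum_eq_geometric (r : ℕ) (hr : 1 ≤ r) :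
    ∑ k ∈ Finset.range ((r - 1) / 2 + 1),
        Polynomial.C ((-1 : ℤ) ^ k * ((r - 1 - k).choose k : ℤ)) *
          X ^ (1 + k) * (1 + X) ^ (r - 1 - 2 * k)
      = ∑ i ∈ Finset.Icc 1 r, (X : Polynomial ℤ) ^ i := by
  obtain ⟨n, rfl⟩ := Nat.exists_eq_add_of_le hr
  have hn : 1 + n - 1 = n := by omega
  have lhs : (∑ k ∈ Finset.range ((1 + n - 1) / 2 + 1),
      Polynomial.C ((-1 : ℤ) ^ k * ((1 + n - 1 - k).choose k : ℤ)) *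
        X ^ (1 + k) * (1 + X) ^ (1 + n - 1 - 2 * k)) = fA n := by
    rw [hn, fA]; rfl
  rw [lhs, fA_closed n, Finset.mul_sum]
  rw [← Finset.Ico_add_one_right_eq_Icc, Finset.sum_Ico_eq_sum_range]
  rw [show 1 + n + 1 - 1 = n + 1 by omega]
  exact Finset.sum_congr rfl fun i _ => by rw [pow_add, pow_one]
end

section
/- For every integer r ≥ 2, the polynomial ∑_{k=0}^{⌊(r-1)/2⌋} (-1)^k C(r-1-k,k) q^{1+k}(1+q)^{r-1-2k} − ∑_{k=0}^{⌊(r-2)/2⌋} (-1)^k C(r-2-k,k) q^{1+k}(1+q)^{r-2-2k} equals q^r in ℤ[q]. -/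
open Polynomial Finset

private noncomputable def gg (n : ℕ) : Polynomial ℤ :=
  ∑ k ∈ Finset.range (n + 1),
    Polynomial.C ((-1 : ℤ) ^ k * ((n - k).choose k : ℤ)) * X ^ (1 + k) * (1 + X) ^ (n - 2 * k)

private lemma pad (n : ℕ) :
    (∑ k ∈ Finset.range (n / 2 + 1),
      Polynomial.C ((-1 : ℤ) ^ k * ((n - k).choose k : ℤ)) * X ^ (1 + k) * (1 + X) ^ (n - 2 * k))
      = gg n := by
  apply Finset.sum_subset
  · intro k hk
    simp only [Finset.mem_range] at *
    omega
  · intro k hk hk'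
    simp only [Finset.mem_range] at hk hk'
    have : (n - k).choose k = 0 := Nat.choose_eq_zero_of_lt (by omega)
    simp [this]

private lemma grec (n : ℕ) : gg (n + 2) = (1 + X) * gg (n + 1) - X * gg n := by
  have h1 : (1 + X) * gg (n + 1) =
      (∑ i ∈ Finset.range (n + 1),
        Polynomial.C ((-1 : ℤ) ^ (i+1) * ((n + 1 - (i+1)).choose (i+1) : ℤ)) * X ^ (1 + (i+1)) *
          (1 + X) ^ (n + 2 - 2 * (i+1)))
      + Polynomial.C ((-1 : ℤ) ^ 0 * ((n + 1 - 0).choose 0 : ℤ)) * X ^ (1 + 0) *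
          (1 + X) ^ (n + 2 - 2 * 0) := by
    have h1' : (1 + X) * gg (n + 1) =
        ∑ k ∈ Finset.range (n + 2),
          Polynomial.C ((-1 : ℤ) ^ k * ((n + 1 - k).choose k : ℤ)) * X ^ (1 + k) *
            (1 + X) ^ (n + 2 - 2 * k) := by
      rw [gg, Finset.mul_sum]
      refine Finset.sum_congr rfl fun k hk => ?_
      by_cases h : 2 * k ≤ n + 1
      · have e : n + 2 - 2 * k = (n + 1 - 2 * k) + 1 := by omega
        rw [e, pow_succ]; ring
      · simp only [Finset.mem_range] at hk
        have : (n + 1 - k).choose k = 0 := Nat.choose_eq_zero_of_lt (by omega)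
        simp [this]
    rw [h1', Finset.sum_range_succ' _ (n + 1)]
  have h2 : X * gg n =
      ∑ i ∈ Finset.range (n + 1),
        Polynomial.C ((-1 : ℤ) ^ i * ((n - i).choose i : ℤ)) * X ^ (2 + i) *
          (1 + X) ^ (n - 2 * i) := by
    rw [gg, Finset.mul_sum]
    refine Finset.sum_congr rfl fun i _ => ?_
    ring
  have hL : gg (n + 2) =
      (∑ i ∈ Finset.range (n + 1),
        Polynomial.C ((-1 : ℤ) ^ (i+1) * ((n + 2 - (i+1)).choose (i+1) : ℤ)) * X ^ (1 + (i+1)) *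
          (1 + X) ^ (n + 2 - 2 * (i+1)))
      + Polynomial.C ((-1 : ℤ) ^ 0 * ((n + 2 - 0).choose 0 : ℤ)) * X ^ (1 + 0) *
          (1 + X) ^ (n + 2 - 2 * 0) := by
    rw [gg, Finset.sum_range_succ' _ (n + 2)]
    congr 1
    rw [Finset.sum_range_succ _ (n + 1)]
    have e : n + 2 - (n + 1 + 1) = 0 := by omega
    rw [e]
    simp [Nat.choose_eq_zero_of_lt]
  have key : ∀ i ∈ Finset.range (n + 1),
      Polynomial.C ((-1 : ℤ) ^ (i + 1) * ((n + 2 - (i+1)).choose (i+1) : ℤ)) *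
        X ^ (1 + (i+1)) * (1 + X) ^ (n + 2 - 2 * (i+1))
      = Polynomial.C ((-1 : ℤ) ^ (i+1) * ((n + 1 - (i+1)).choose (i+1) : ℤ)) *
          X ^ (1 + (i+1)) * (1 + X) ^ (n + 2 - 2 * (i+1))
        - Polynomial.C ((-1 : ℤ) ^ i * ((n - i).choose i : ℤ)) * X ^ (2 + i) *
          (1 + X) ^ (n - 2 * i) := by
    intro i hi
    simp only [Finset.mem_range] at hi
    have e1 : n + 2 - (i + 1) = (n - i) + 1 := by omega
    have e2 : n + 1 - (i + 1) = n - i := by omega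
    have e3 : n + 2 - 2 * (i + 1) = n - 2 * i := by omega
    have e4 : 1 + (i + 1) = 2 + i := by omega
    rw [e1, e2, e3, e4, Nat.choose_succ_succ]
    push_cast
    rw [show ((-1 : ℤ)) ^ (i+1) * (((n - i).choose i : ℤ) + ((n - i).choose (i+1) : ℤ))
        = (-1 : ℤ) ^ (i+1) * ((n - i).choose (i+1) : ℤ)
          - (-1 : ℤ) ^ i * ((n - i).choose i : ℤ) from by ring]
    rw [map_sub, sub_mul, sub_mul]
  rw [hL, h1, h2, Finset.sum_congr rfl key, Finset.sum_sub_distrib]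
  simp only [Nat.sub_zero, Nat.choose_zero_right, Nat.cast_one, mul_one, one_mul, pow_zero]
  ring

private lemma gsum : ∀ n : ℕ, gg n = ∑ j ∈ Finset.range (n + 1), (X : Polynomial ℤ) ^ (1 + j) := by
  intro n
  induction n using Nat.strong_induction_on with
  | _ n ih =>
    match n with
    | 0 => simp [gg]
    | 1 =>
      rw [gg]
      simp [Finset.sum_range_succ]
      ring
    | (n+2) =>
      rw [grec, ih (n+1) (by omega), ih n (by omega)]
      have e1 : ∑ j ∈ Finset.range (n + 2 + 1), (X : Polynomial ℤ) ^ (1 + j)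
          = (∑ j ∈ Finset.range (n + 1), (X : Polynomial ℤ) ^ (1 + j)) + X ^ (n + 2) + X ^ (n + 3) := by
        rw [show n + 2 + 1 = (n + 2) + 1 from rfl, Finset.sum_range_succ,
          show n + 2 = (n + 1) + 1 from rfl, Finset.sum_range_succ]
        ring_nf
      have e2 : ∑ j ∈ Finset.range (n + 1 + 1), (X : Polynomial ℤ) ^ (1 + j)
          = (∑ j ∈ Finset.range (n + 1), (X : Polynomial ℤ) ^ (1 + j)) + X ^ (n + 2) := by
        rw [Finset.sum_range_succ]
        ring_nf
      rw [e1, e2]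
      ring

open Polynomial in
/-- The `q`-analog of the zero weight multiplicity in the `so(2r+1)` representation with
highest weight the sum of the simple roots equals `q^r`. -/
theorem q_mult_of_zero_weight (r : ℕ) (hr : 2 ≤ r) :
    (∑ k ∈ Finset.range ((r - 1) / 2 + 1),
        Polynomial.C ((-1 : ℤ) ^ k * ((r - 1 - k).choose k : ℤ)) *
          X ^ (1 + k) * (1 + X) ^ (r - 1 - 2 * k))
      - (∑ k ∈ Finset.range ((r - 2) / 2 + 1),
        Polynomial.C ((-1 : ℤ) ^ k * ((r - 2 - k).choose k : ℤ)) *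
          X ^ (1 + k) * (1 + X) ^ (r - 2 - 2 * k))
      = (X : Polynomial ℤ) ^ r := by
  obtain ⟨m, rfl⟩ : ∃ m, r = m + 2 := ⟨r - 2, by omega⟩
  have d1 : m + 2 - 1 = m + 1 := by omega
  have d2 : m + 2 - 2 = m := by omega
  simp only [d1, d2]
  rw [pad (m + 1), pad m, gsum, gsum, show m + 1 + 1 = (m + 1) + 1 from rfl,
    Finset.sum_range_succ, add_sub_cancel_left, show 1 + (m + 1) = m + 2 from by omega]
end

section
/- For the Weyl group W of type B_r (r ≥ 2), identified with signed permutations of ℝ^r generated by simple reflections s_1,...,s_r, let ρ = (r−½)ε_1 + (r−3/2)ε_2 + ⋯ + ½ε_r and ϖ_1 = ε_1. If σ = s_{i_1} s_{i_2} ⋯ s_{i_k} where i_1,...,i_k are pairwise nonconsecutive integers with 2 ≤ i_j ≤ r, then σ(ϖ_1 + ρ) − ρ = ϖ_1 − (α_{i_1} + ⋯ + α_{i_k}), which is a nonnegative integral combination of the simple roots α_1,...,α_r (where α_i = ε_i − ε_{i+1} for i < r and α_r = ε_r). -/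
/-- In type `B_r` (`r ≥ 2`): if `σ = s_{i_1} ⋯ s_{i_k}` with the `i_j` pairwise
nonconsecutive integers in `[2, r]`, then `σ(ϖ_1 + ρ) - ρ = ϖ_1 - (α_{i_1} + ⋯ + α_{i_k})`,
a nonnegative integral combination of the simple roots. -/
theorem type_B_weyl_alternation (r k : ℕ) (hr : 2 ≤ r)
    (ε : ℕ → ℕ → ℝ) (hε : ∀ i j, ε i j = if j = i then 1 else 0)
    (α : ℕ → ℕ → ℝ)
    (hα : ∀ i, 1 ≤ i → i < r → α i = ε i - ε (i + 1))
    (hαr : α r = ε r)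
    (ρ : ℕ → ℝ) (hρ : ρ = ∑ i ∈ Finset.Icc 1 r, ((r : ℝ) - i + 1 / 2) • ε i)
    (s : ℕ → (ℕ → ℝ) → (ℕ → ℝ))
    (hs : ∀ m, 1 ≤ m → m < r → ∀ v j, s m v j =
      if j = m then v (m + 1) else if j = m + 1 then v m else v j)
    (hsr : ∀ v j, s r v j = if j = r then -v j else v j)
    (ι : Fin k → ℕ)
    (hι : ∀ a, 2 ≤ ι a ∧ ι a ≤ r)
    (hnc : ∀ a b, a ≠ b → 2 ≤ |(ι a : ℤ) - (ι b : ℤ)|) :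
    (List.ofFn ι).foldr s (ε 1 + ρ) - ρ = ε 1 - ∑ a, α (ι a) ∧
    ∃ c : ℕ → ℕ, (List.ofFn ι).foldr s (ε 1 + ρ) - ρ
      = ∑ i ∈ Finset.Icc 1 r, (c i : ℝ) • α i := by
  classical
  -- value of ρ at coordinates 1..r
  have hρval : ∀ j, 1 ≤ j → j ≤ r → ρ j = (r : ℝ) - j + 1 / 2 := by
    intro j h1 h2
    rw [hρ, Finset.sum_apply]
    have : ∀ i ∈ Finset.Icc 1 r,
        (((r : ℝ) - i + 1 / 2) • ε i) j = if j = i then (r : ℝ) - i + 1 / 2 else 0 := by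
      intro i _
      rw [Pi.smul_apply, hε, smul_eq_mul]
      split <;> simp
    rw [Finset.sum_congr rfl this, Finset.sum_ite_eq]
    simp [Finset.mem_Icc, h1, h2]
  -- α vanishes off its support
  have hα0 : ∀ b j, 2 ≤ b → b ≤ r → j ≠ b → j ≠ b + 1 → α b j = 0 := by
    intro b j hb2 hbr hj1 hj2
    by_cases hb : b = r
    · subst hb; rw [hαr, hε]; simp [hj1]
    · rw [hα b (by omega) (by omega)]
      simp [Pi.sub_apply, hε, hj1, hj2]
  -- sums of α's over a list vanish away from their supports
  have hS0 : ∀ (j : ℕ) (t : List ℕ), (∀ b ∈ t, 2 ≤ b ∧ b ≤ r) →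
      (∀ b ∈ t, j ≠ b ∧ j ≠ b + 1) → (t.map α).sum j = 0 := by
    intro j t
    induction t with
    | nil => intro _ _; simp
    | cons b t ih =>
      intro hmem hj
      have hb := hmem b List.mem_cons_self
      have hjb := hj b List.mem_cons_self
      rw [List.map_cons, List.sum_cons, Pi.add_apply,
        hα0 b j hb.1 hb.2 hjb.1 hjb.2,
        ih (fun c hc => hmem c (List.mem_cons_of_mem _ hc))
          (fun c hc => hj c (List.mem_cons_of_mem _ hc))]
      ring
  -- the key computation, by induction on the word
  have key : ∀ L : List ℕ, (∀ b ∈ L, 2 ≤ b ∧ b ≤ r) →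
      List.Pairwise (fun a b : ℕ => 2 ≤ |(a : ℤ) - (b : ℤ)|) L →
      L.foldr s (ε 1 + ρ) = ε 1 + ρ - (L.map α).sum := by
    intro L
    induction L with
    | nil => intro _ _; simp
    | cons a t ih =>
      intro hmem hpw
      rw [List.pairwise_cons] at hpw
      have ha := hmem a List.mem_cons_self
      have hmt : ∀ b ∈ t, 2 ≤ b ∧ b ≤ r := fun b hb => hmem b (List.mem_cons_of_mem _ hb)
      have ht := ih hmt hpw.2
      have hfar : ∀ b ∈ t, a ≠ b ∧ a ≠ b + 1 ∧ a + 1 ≠ b ∧ a + 1 ≠ b + 1 := by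
        intro b hb
        have h2 := hpw.1 b hb
        rcases le_abs.mp h2 with h | h <;> omega
      have hSa : (t.map α).sum a = 0 :=
        hS0 a t hmt (fun b hb => ⟨(hfar b hb).1, (hfar b hb).2.1⟩)
      have hSa1 : (t.map α).sum (a + 1) = 0 :=
        hS0 (a + 1) t hmt (fun b hb => ⟨(hfar b hb).2.2.1, (hfar b hb).2.2.2⟩)
      rw [List.foldr_cons, ht, List.map_cons, List.sum_cons]
      by_cases har : a = r
      · have hsr' : ∀ v j, s a v j = if j = a then -v j else v j := by
          rw [har]; exact hsr
        have hαa : α a = ε a := by rw [har]; exact hαr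
        funext j
        rw [hsr']
        by_cases hj : j = a
        · rw [if_pos hj, hj]
          simp only [Pi.sub_apply, Pi.add_apply]
          rw [hSa, hρval a (by omega) (by omega), hαa]
          simp only [hε, if_pos rfl, if_neg (show a ≠ 1 by omega)]
          rw [har]
          push_cast
          ring
        · rw [if_neg hj]
          simp only [Pi.sub_apply, Pi.add_apply]
          rw [hαa]
          simp only [hε, if_neg hj]
          ring
      · have har' : a < r := by omega
        have haα : α a = ε a - ε (a + 1) := hα a (by omega) har'
        funext j
        rw [hs a (by omega) har']
        by_cases hj : j = a
        · rw [if_pos hj, hj]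
          simp only [Pi.sub_apply, Pi.add_apply]
          rw [hSa, hSa1, hρval a (by omega) (by omega), hρval (a + 1) (by omega) (by omega),
            haα]
          simp only [Pi.sub_apply, hε, if_pos rfl, if_neg (show a ≠ 1 by omega),
            if_neg (show a + 1 ≠ 1 by omega), if_neg (show a ≠ a + 1 by omega)]
          push_cast
          ring
        · by_cases hj1 : j = a + 1
          · rw [if_neg hj, if_pos hj1, hj1]
            simp only [Pi.sub_apply, Pi.add_apply]
            rw [hSa, hSa1, hρval a (by omega) (by omega), hρval (a + 1) (by omega) (by omega),
              haα]
            simp only [Pi.sub_apply, hε, if_pos rfl, if_neg (show a ≠ 1 by omega),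
              if_neg (show a + 1 ≠ 1 by omega), if_neg (show a + 1 ≠ a by omega)]
            push_cast
            ring
          · rw [if_neg hj, if_neg hj1]
            simp only [Pi.sub_apply, Pi.add_apply]
            rw [hα0 a j ha.1 ha.2 hj hj1]
            ring
  -- apply to our word
  have hmem : ∀ b ∈ List.ofFn ι, 2 ≤ b ∧ b ≤ r := by
    intro b hb
    rw [List.mem_ofFn] at hb
    obtain ⟨a, rfl⟩ := hb
    exact hι a
  have hpw : List.Pairwise (fun a b : ℕ => 2 ≤ |(a : ℤ) - (b : ℤ)|) (List.ofFn ι) := by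
    rw [List.pairwise_ofFn]
    intro i j hij
    exact hnc i j (Fin.ne_of_lt hij)
  have hsum : ((List.ofFn ι).map α).sum = ∑ a, α (ι a) := by
    rw [List.map_ofFn, List.sum_ofFn]
    rfl
  have hfold : (List.ofFn ι).foldr s (ε 1 + ρ) - ρ = ε 1 - ∑ a, α (ι a) := by
    rw [key _ hmem hpw, hsum]; abel
  refine ⟨hfold, ?_⟩
  -- express as nonnegative integral combination
  have hinj : ∀ a ∈ (Finset.univ : Finset (Fin k)), ∀ b ∈ (Finset.univ : Finset (Fin k)),
      ι a = ι b → a = b := by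
    intro a _ b _ hab
    by_contra hne
    have := hnc a b hne
    rw [hab, sub_self, abs_zero] at this
    omega
  set img := Finset.image ι Finset.univ with himg
  have hsub : img ⊆ Finset.Icc 1 r := by
    intro i hi
    rw [himg, Finset.mem_image] at hi
    obtain ⟨a, _, rfl⟩ := hi
    exact Finset.mem_Icc.mpr ⟨by have := hι a; omega, (hι a).2⟩
  -- ε 1 = sum of all simple roots
  have hε1 : (∑ i ∈ Finset.Icc 1 r, α i) = ε 1 := by
    obtain ⟨m, rfl⟩ : ∃ m, r = m + 1 := ⟨r - 1, by omega⟩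
    rw [Finset.sum_Icc_succ_top (by omega), hαr]
    have hcongr : ∀ i ∈ Finset.Icc 1 m, α i = ε i - ε (i + 1) := by
      intro i hi
      rw [Finset.mem_Icc] at hi
      exact hα i hi.1 (by omega)
    rw [Finset.sum_congr rfl hcongr, ← Finset.Ico_add_one_right_eq_Icc, Finset.sum_Ico_eq_sum_range]
    have htel : ∑ i ∈ Finset.range m, (ε (i + 1) - ε (i + 1 + 1)) = ε 1 - ε (m + 1) := by
      simpa using Finset.sum_range_sub' (fun n => ε (n + 1)) m
    have hc2 : ∑ i ∈ Finset.range (m + 1 - 1), (ε (1 + i) - ε (1 + i + 1))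
        = ∑ i ∈ Finset.range m, (ε (i + 1) - ε (i + 1 + 1)) := by
      rw [show m + 1 - 1 = m by omega]
      exact Finset.sum_congr rfl fun i _ => by rw [show 1 + i = i + 1 by omega]
    rw [hc2, htel]
    abel
  refine ⟨fun i => if i ∈ img then 0 else 1, ?_⟩
  rw [hfold]
  have hmain : ∑ i ∈ Finset.Icc 1 r, ((if i ∈ img then (0 : ℕ) else 1 : ℕ) : ℝ) • α i
      = ε 1 - ∑ a, α (ι a) := by
    have hterm : ∀ i ∈ Finset.Icc 1 r,
        ((if i ∈ img then (0 : ℕ) else 1 : ℕ) : ℝ) • α i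
          = if i ∉ img then α i else 0 := by
      intro i _
      by_cases h : i ∈ img <;> simp [h]
    rw [Finset.sum_congr rfl hterm, ← Finset.sum_filter, ← Finset.sdiff_eq_filter,
      Finset.sum_sdiff_eq_sub hsub, hε1, himg, Finset.sum_image hinj]
  simpa using hmain.symm
end
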